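/- Let n ≥ 2, d ≥ 5, and let 𝒜₁, ..., 𝒜_d be families of subsets of [n] = {1,...,n} that are pairwise cross-IU (i.e., 𝒜ᵢ and 𝒜ⱼ are cross-IU for all i ≠ j), with |𝒜₁| ≥ |𝒜₂| ≥ ... ≥ |𝒜_d|. Then |𝒜₁| + ... + |𝒜_d| ≤ d · 2^(n-2); moreover, if equality holds then 𝒜₁ = 𝒜₂ = ... = 𝒜_d. -/

import Mathlib

lemma numcore (d N b1 b2 X1 X2 Y1 Y2 : ℤ) (hd : 5 ≤ d) (hN : 0 < N)
    (hb1 : 0 ≤ b1) (hb2 : 0 ≤ b2) (hX1 : 0 ≤ X1) (hX2 : 0 ≤ X2) (hY1 : 0 ≤ Y1) (hY2 : 0 ≤ Y2)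
    (hX2' : X2 ≤ 2*N) (hY2' : Y2 ≤ 2*N) (hX : X1 + X2 ≤ 4*N) (hY : Y1 + Y2 ≤ 4*N)
    (h1 : 4*N*b1 ≤ X1*Y1) (h2 : 4*N*b2 ≤ X2*Y2) :
    b1 + (d-1)*b2 ≤ d*N ∧ (b1 + (d-1)*b2 = d*N → b1 = N) := by
  have hd1 : (0:ℤ) ≤ d - 1 := by linarith
  have hd2 : (0:ℤ) < d - 2 := by linarith
  have hd4 : (0:ℤ) < d - 4 := by linarith
  have e1 : X1*Y1 ≤ (4*N-X2)*(4*N-Y2) := by nlinarith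
  have e2 : (4*N-X2)*(4*N-Y2) + (d-1)*(X2*Y2) ≤ 4*d*N*N := by
    nlinarith [mul_nonneg (mul_nonneg (by linarith : (0:ℤ) ≤ d-2) (by linarith : (0:ℤ) ≤ 2*N - X2)) (by linarith : (0:ℤ) ≤ Y2),
      mul_nonneg (by linarith : (0:ℤ) ≤ 2*N - Y2) (by linarith : (0:ℤ) ≤ X2),
      mul_nonneg (mul_nonneg hd4.le hN.le) (by linarith : (0:ℤ) ≤ 2*N - Y2)]
  have hq : (d-1)*(4*N*b2) ≤ (d-1)*(X2*Y2) := mul_le_mul_of_nonneg_left h2 hd1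
  have key : 4*N*(b1 + (d-1)*b2) ≤ 4*(d*N)*N := by nlinarith
  constructor
  · have h4N : (0:ℤ) < 4*N := by linarith
    have := le_of_mul_le_mul_left (by linarith [key] : 4*N*(b1 + (d-1)*b2) ≤ 4*N*(d*N)) h4N
    linarith
  · intro heq
    have t0 : 4*N*b1 + (d-1)*(4*N*b2) = 4*d*N*N := by linear_combination (4*N) * heq
    have t1 : X1*Y1 + (d-1)*(X2*Y2) = 4*d*N*N := le_antisymm (by linarith) (by linarith)
    have t2 : (4*N-X2)*(4*N-Y2) + (d-1)*(X2*Y2) = 4*d*N*N := le_antisymm e2 (by linarith)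
    have key2 : d*(2*N-X2)*(2*N-Y2) = 2*(d-2)*N*((2*N-X2)+(2*N-Y2)) := by linear_combination t2
    have hX2e : X2 = 2*N := by
      by_contra hc
      have hX2lt : X2 < 2*N := lt_of_le_of_ne hX2' hc
      rcases eq_or_lt_of_le hY2' with hY2e | hY2lt
      · rw [hY2e] at key2
        nlinarith [mul_pos (mul_pos hd2 hN) (by linarith : (0:ℤ) < 2*N - X2)]
      · nlinarith [mul_nonneg (mul_nonneg hd2.le (by linarith : (0:ℤ) ≤ X2)) (by linarith : (0:ℤ) ≤ 2*N - Y2),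
          mul_nonneg (by linarith : (0:ℤ) ≤ Y2) (by linarith : (0:ℤ) ≤ 2*N - X2),
          mul_pos (mul_pos hd4 hN) (by linarith : (0:ℤ) < 2*N - X2)]
    have hY2e : Y2 = 2*N := by
      rw [hX2e] at key2
      by_contra hc
      have hY2lt : Y2 < 2*N := lt_of_le_of_ne hY2' hc
      nlinarith [mul_pos (mul_pos hd2 hN) (by linarith : (0:ℤ) < 2*N - Y2)]
    have hQ : X2*Y2 = 4*N*N := by rw [hX2e, hY2e]; ring
    have hXY : X1*Y1 = 4*N*N := by linear_combination t1 - (d-1)*hQ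
    have hb1e : 4*N*b1 = 4*N*N := by
      have h1' : 4*N*b1 ≤ 4*N*N := by rw [← hXY]; exact h1
      have h2' : (d-1)*(X2*Y2) = (d-1)*(4*N*N) := by rw [hQ]
      linarith
    have h4N : (4*N:ℤ) ≠ 0 := by positivity
    exact mul_left_cancel₀ h4N (by linear_combination hb1e)

open Finset

variable {n : ℕ}

/-- If no member of 𝒴 is the complement of a member of 𝒳, the cards sum to ≤ 2^n. -/
lemma complFree_card (𝒳 𝒴 : Finset (Finset (Fin n))) (h : ∀ S ∈ 𝒳, Sᶜ ∉ 𝒴) :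
    𝒳.card + 𝒴.card ≤ 2^n := by
  have hdisj : Disjoint 𝒳 (𝒴.image compl) := by
    rw [Finset.disjoint_left]
    intro S hS hS'
    obtain ⟨T, hT, rfl⟩ := Finset.mem_image.1 hS'
    exact h _ hS (by simpa using hT)
  calc 𝒳.card + 𝒴.card = 𝒳.card + (𝒴.image compl).card := by
        rw [Finset.card_image_of_injective _ compl_injective]
    _ = (𝒳 ∪ 𝒴.image compl).card := (Finset.card_union_of_disjoint hdisj).symm
    _ ≤ Fintype.card (Finset (Fin n)) := Finset.card_le_univ _
    _ = 2^n := by simp [Fintype.card_finset]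


lemma pairlemma (n d : ℕ) (hn : 2 ≤ n) (hd : 5 ≤ d)
    (ℋ 𝒢 : Finset (Finset (Fin n)))
    (hx : ∀ A ∈ ℋ, ∀ B ∈ 𝒢, A ∩ B ≠ ∅ ∧ A ∪ B ≠ Finset.univ)
    (hg : ∀ A ∈ 𝒢, ∀ B ∈ 𝒢, A ∩ B ≠ ∅ ∧ A ∪ B ≠ Finset.univ) :
    ℋ.card + (d-1) * 𝒢.card ≤ d * 2^(n-2) ∧
      (ℋ.card + (d-1) * 𝒢.card = d * 2^(n-2) → ℋ.card = 2^(n-2)) := by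
  classical
  set U : Finset (Finset (Fin n)) → Finset (Finset (Fin n)) :=
    fun ℱ => univ.filter (fun S => ∃ H ∈ ℱ, H ⊆ S) with hU
  set D : Finset (Finset (Fin n)) → Finset (Finset (Fin n)) :=
    fun ℱ => univ.filter (fun S => ∃ H ∈ ℱ, S ⊆ H) with hD
  have memU : ∀ (ℱ) (S : Finset (Fin n)), S ∈ U ℱ ↔ ∃ H ∈ ℱ, H ⊆ S := by
    intro ℱ S; simp [hU]
  have memD : ∀ (ℱ) (S : Finset (Fin n)), S ∈ D ℱ ↔ ∃ H ∈ ℱ, S ⊆ H := by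
    intro ℱ S; simp [hD]
  have hupper : ∀ ℱ, IsUpperSet ((U ℱ : Finset (Finset (Fin n))) : Set (Finset (Fin n))) := by
    intro ℱ a b hab ha
    rw [Finset.mem_coe, memU] at ha ⊢
    obtain ⟨H, hH, hHa⟩ := ha
    exact ⟨H, hH, hHa.trans hab⟩
  have hlower : ∀ ℱ, IsLowerSet ((D ℱ : Finset (Finset (Fin n))) : Set (Finset (Fin n))) := by
    intro ℱ a b hab ha
    rw [Finset.mem_coe, memD] at ha ⊢
    obtain ⟨H, hH, hHa⟩ := ha
    exact ⟨H, hH, hab.trans hHa⟩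
  have kleit : ∀ ℱ : Finset (Finset (Fin n)), 2^n * ℱ.card ≤ (U ℱ).card * (D ℱ).card := by
    intro ℱ
    have hsub : ℱ ⊆ D ℱ ∩ U ℱ := by
      intro S hS
      rw [Finset.mem_inter, memD, memU]
      exact ⟨⟨S, hS, Finset.Subset.refl S⟩, ⟨S, hS, Finset.Subset.refl S⟩⟩
    have hk := (hlower ℱ).card_inter_le_finset (hupper ℱ)
    calc 2^n * ℱ.card ≤ 2^n * (D ℱ ∩ U ℱ).card :=
          Nat.mul_le_mul_left _ (Finset.card_le_card hsub)
      _ ≤ (D ℱ).card * (U ℱ).card := by simpa [Fintype.card_fin] using hk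
      _ = (U ℱ).card * (D ℱ).card := Nat.mul_comm _ _
  -- generic cross bounds
  have crossUgen : ∀ ℱ1 ℱ2 : Finset (Finset (Fin n)),
      (∀ A ∈ ℱ1, ∀ B ∈ ℱ2, A ∩ B ≠ ∅) → (U ℱ1).card + (U ℱ2).card ≤ 2^n := by
    intro ℱ1 ℱ2 hcross
    apply complFree_card
    intro S hS hS'
    rw [memU] at hS hS'
    obtain ⟨H, hH, hHS⟩ := hS
    obtain ⟨G, hG, hGS⟩ := hS'
    refine hcross H hH G hG ?_
    have h1 : H ∩ G ⊆ S ∩ Sᶜ := Finset.inter_subset_inter hHS hGS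
    rw [Finset.inter_compl] at h1
    exact Finset.subset_empty.1 h1
  have crossDgen : ∀ ℱ1 ℱ2 : Finset (Finset (Fin n)),
      (∀ A ∈ ℱ1, ∀ B ∈ ℱ2, A ∪ B ≠ Finset.univ) → (D ℱ1).card + (D ℱ2).card ≤ 2^n := by
    intro ℱ1 ℱ2 hcross
    apply complFree_card
    intro S hS hS'
    rw [memD] at hS hS'
    obtain ⟨H, hH, hHS⟩ := hS
    obtain ⟨G, hG, hGS⟩ := hS'
    refine hcross H hH G hG ?_
    have h1 : S ∪ Sᶜ ⊆ H ∪ G := Finset.union_subset_union hHS hGS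
    rw [Finset.union_compl] at h1
    exact Finset.univ_subset_iff.1 h1
  have crossU := crossUgen ℋ 𝒢 (fun A hA B hB => (hx A hA B hB).1)
  have crossD := crossDgen ℋ 𝒢 (fun A hA B hB => (hx A hA B hB).2)
  have selfU := crossUgen 𝒢 𝒢 (fun A hA B hB => (hg A hA B hB).1)
  have selfD := crossDgen 𝒢 𝒢 (fun A hA B hB => (hg A hA B hB).2)
  -- numeric setup
  have h2n : (2:ℕ)^n = 4 * 2^(n-2) := by
    have h := Nat.sub_add_cancel hn
    calc (2:ℕ)^n = 2^(n-2+2) := by rw [h]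
      _ = 4 * 2^(n-2) := by ring
  have hk1 := kleit ℋ
  have hk2 := kleit 𝒢
  rw [h2n] at hk1 hk2 crossU crossD selfU selfD
  have hNpos : (0:ℤ) < 2^(n-2) := by positivity
  have num := numcore d (2^(n-2)) ℋ.card 𝒢.card (U ℋ).card (U 𝒢).card (D ℋ).card (D 𝒢).card
    (by exact_mod_cast hd) hNpos
    (by positivity) (by positivity) (by positivity) (by positivity) (by positivity) (by positivity)
    (by push_cast; linarith [selfU] : ((U 𝒢).card:ℤ) ≤ 2*2^(n-2))
    (by push_cast; linarith [selfD] : ((D 𝒢).card:ℤ) ≤ 2*2^(n-2))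
    (by exact_mod_cast crossU) (by exact_mod_cast crossD)
    (by exact_mod_cast hk1) (by exact_mod_cast hk2)
  have hcast : ((d:ℤ)-1) = ((d-1 : ℕ) : ℤ) := by
    have : 1 ≤ d := by omega
    push_cast [this]; ring
  constructor
  · have := num.1
    rw [hcast] at this
    exact_mod_cast this
  · intro heq
    have heq' : (ℋ.card:ℤ) + ((d:ℤ)-1) * 𝒢.card = d * 2^(n-2) := by
      rw [hcast]; exact_mod_cast heq
    have := num.2 heq'
    exact_mod_cast this

theorem stmt_11 (n d : ℕ) (hn : 2 ≤ n) (hd : 5 ≤ d)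
    (𝒜 : Fin d → Finset (Finset (Fin n)))
    (hIU : ∀ i j : Fin d, i ≠ j →
      ∀ A ∈ 𝒜 i, ∀ B ∈ 𝒜 j, A ∩ B ≠ ∅ ∧ A ∪ B ≠ Finset.univ)
    (hmono : ∀ i j : Fin d, i ≤ j → (𝒜 j).card ≤ (𝒜 i).card) :
    ∑ i : Fin d, (𝒜 i).card ≤ d * 2 ^ (n - 2) ∧
      (∑ i : Fin d, (𝒜 i).card = d * 2 ^ (n - 2) → ∀ i j : Fin d, 𝒜 i = 𝒜 j) := by
  classical
  set m : Finset (Fin n) → ℕ := fun S => (univ.filter (fun i : Fin d => S ∈ 𝒜 i)).card with hm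
  set F : ℕ → Finset (Finset (Fin n)) := fun k => univ.filter (fun S => k ≤ m S) with hF
  have memF : ∀ (k) (S : Finset (Fin n)), S ∈ F k ↔ k ≤ m S := by intro k S; simp [hF]
  have hmd : ∀ S, m S ≤ d := by
    intro S
    calc m S ≤ (univ : Finset (Fin d)).card := Finset.card_filter_le _ _
      _ = d := by simp
  have hFsub : ∀ j k : ℕ, j ≤ k → F k ⊆ F j := by
    intro j k hjk S hS
    rw [memF] at hS ⊢
    omega
  -- Step A : double counting
  have stepA : ∑ i : Fin d, (𝒜 i).card = ∑ k ∈ Finset.range d, (F (k+1)).card := by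
    have h1 : ∀ i : Fin d, (𝒜 i).card
        = ∑ S : Finset (Fin n), if S ∈ 𝒜 i then 1 else 0 := by
      intro i
      rw [← Finset.card_filter]
      congr 1
      ext S; simp
    have h2 : ∀ S : Finset (Fin n), m S
        = ∑ k ∈ Finset.range d, if k + 1 ≤ m S then 1 else 0 := by
      intro S
      have hle := hmd S
      rw [← Finset.card_filter]
      have : (Finset.range d).filter (fun k => k + 1 ≤ m S) = Finset.range (m S) := by
        ext a; simp only [Finset.mem_filter, Finset.mem_range]; omega
      rw [this, Finset.card_range]
    calc ∑ i : Fin d, (𝒜 i).card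
        = ∑ i : Fin d, ∑ S : Finset (Fin n), if S ∈ 𝒜 i then 1 else 0 := by
          exact Finset.sum_congr rfl (fun i _ => h1 i)
      _ = ∑ S : Finset (Fin n), ∑ i : Fin d, if S ∈ 𝒜 i then 1 else 0 := Finset.sum_comm
      _ = ∑ S : Finset (Fin n), m S := by
          refine Finset.sum_congr rfl (fun S _ => ?_)
          exact (Finset.card_filter _ _).symm
      _ = ∑ S : Finset (Fin n), ∑ k ∈ Finset.range d, if k + 1 ≤ m S then 1 else 0 := by
          exact Finset.sum_congr rfl (fun S _ => h2 S)
      _ = ∑ k ∈ Finset.range d, ∑ S : Finset (Fin n), if k + 1 ≤ m S then 1 else 0 :=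
          Finset.sum_comm
      _ = ∑ k ∈ Finset.range d, (F (k+1)).card := by
          refine Finset.sum_congr rfl (fun k _ => ?_)
          rw [hF]; exact (Finset.card_filter _ _).symm
  -- cross hypotheses for F 1, F 2
  have hex1 : ∀ S ∈ F 1, ∃ i, S ∈ 𝒜 i := by
    intro S hS
    rw [memF] at hS
    obtain ⟨i, hi⟩ := Finset.card_pos.1 (by omega : 0 < m S)
    exact ⟨i, (Finset.mem_filter.1 hi).2⟩
  have hex2 : ∀ S ∈ F 2, ∃ i j : Fin d, i ≠ j ∧ S ∈ 𝒜 i ∧ S ∈ 𝒜 j := by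
    intro S hS
    rw [memF] at hS
    obtain ⟨i, hi, j, hj, hij⟩ := Finset.one_lt_card.1 (by omega : 1 < m S)
    exact ⟨i, j, hij, (Finset.mem_filter.1 hi).2, (Finset.mem_filter.1 hj).2⟩
  have hx : ∀ A ∈ F 1, ∀ B ∈ F 2, A ∩ B ≠ ∅ ∧ A ∪ B ≠ Finset.univ := by
    intro A hA B hB
    obtain ⟨i, hi⟩ := hex1 A hA
    obtain ⟨j, k, hjk, hj, hk⟩ := hex2 B hB
    rcases eq_or_ne i j with rfl | hij
    · exact hIU i k (by simpa using hjk) A hi B hk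
    · exact hIU i j hij A hi B hj
  have hg : ∀ A ∈ F 2, ∀ B ∈ F 2, A ∩ B ≠ ∅ ∧ A ∪ B ≠ Finset.univ := by
    intro A hA B hB
    obtain ⟨i, i', hii', hi, hi'⟩ := hex2 A hA
    obtain ⟨j, _, _, hj, _⟩ := hex2 B hB
    rcases eq_or_ne i j with rfl | hij
    · exact hIU i' i (Ne.symm hii') A hi' B hj
    · exact hIU i j hij A hi B hj
  have main := pairlemma n d hn hd (F 1) (F 2) hx hg
  -- sum bound
  obtain ⟨e, rfl⟩ : ∃ e, d = e + 1 := ⟨d - 1, by omega⟩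
  have sumbound : ∑ k ∈ Finset.range (e+1), (F (k+1)).card
      ≤ (F 1).card + e * (F 2).card := by
    rw [Finset.sum_range_succ']
    have : ∑ k ∈ Finset.range e, (F (k+1+1)).card ≤ e * (F 2).card := by
      calc ∑ k ∈ Finset.range e, (F (k+1+1)).card
          ≤ ∑ _k ∈ Finset.range e, (F 2).card :=
            Finset.sum_le_sum (fun k _ => Finset.card_le_card (hFsub 2 (k+2) (by omega)))
        _ = e * (F 2).card := by rw [Finset.sum_const, Finset.card_range, smul_eq_mul]
    simp only [Nat.zero_add] at *
    omega
  have he1 : e + 1 - 1 = e := by omega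
  constructor
  · calc ∑ i : Fin (e+1), (𝒜 i).card
        = ∑ k ∈ Finset.range (e+1), (F (k+1)).card := stepA
      _ ≤ (F 1).card + e * (F 2).card := sumbound
      _ = (F 1).card + (e + 1 - 1) * (F 2).card := by rw [he1]
      _ ≤ (e+1) * 2^(n-2) := main.1
  · intro heq
    have e1 : (F 1).card + (e + 1 - 1) * (F 2).card = (e+1) * 2^(n-2) := by
      refine le_antisymm main.1 ?_
      rw [he1, ← heq, stepA]
      exact sumbound
    have hF1card : (F 1).card = 2^(n-2) := main.2 e1
    -- every term equals 2^(n-2)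
    have hterm : ∀ k ∈ Finset.range (e+1), (F (k+1)).card = 2^(n-2) := by
      by_contra hcon
      push_neg at hcon
      obtain ⟨k0, hk0, hne⟩ := hcon
      have hlt : (F (k0+1)).card < 2^(n-2) := by
        have := Finset.card_le_card (hFsub 1 (k0+1) (by omega))
        omega
      have hsum : ∑ k ∈ Finset.range (e+1), (F (k+1)).card
          < ∑ _k ∈ Finset.range (e+1), 2^(n-2) := by
        refine Finset.sum_lt_sum (fun k _ => ?_) ⟨k0, hk0, hlt⟩
        have := Finset.card_le_card (hFsub 1 (k+1) (by omega))
        omega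
      rw [Finset.sum_const, Finset.card_range, smul_eq_mul, ← stepA, heq] at hsum
      omega
    have hFdcard : (F (e+1)).card = 2^(n-2) := hterm e (by simp)
    have hFd : F (e+1) = F 1 :=
      Finset.eq_of_subset_of_card_le (hFsub 1 (e+1) (by omega)) (by omega)
    have hall : ∀ i j : Fin (e+1), ∀ S ∈ 𝒜 i, S ∈ 𝒜 j := by
      intro i j S hS
      have hS1 : S ∈ F 1 := by
        rw [memF]
        have : i ∈ univ.filter (fun i : Fin (e+1) => S ∈ 𝒜 i) := by simp [hS]
        exact Finset.card_pos.2 ⟨i, this⟩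
      have hSd : S ∈ F (e+1) := by rw [hFd]; exact hS1
      rw [memF] at hSd
      have hfull : univ.filter (fun i : Fin (e+1) => S ∈ 𝒜 i) = univ := by
        apply Finset.eq_of_subset_of_card_le (Finset.subset_univ _)
        calc ((univ : Finset (Fin (e+1)))).card = e + 1 := by simp
          _ ≤ m S := hSd
      have : j ∈ univ.filter (fun i : Fin (e+1) => S ∈ 𝒜 i) := by
        rw [hfull]; exact Finset.mem_univ j
      exact (Finset.mem_filter.1 this).2
    intro i j
    exact Finset.Subset.antisymm (fun S hS => hall i j S hS) (fun S hS => hall j i S hS)
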